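/- Let E₁, E₂ be spectral measures on Hilbert spaces H₁, H₂ and let Φ admit a Haagerup representation Φ(x,y) = Σₙ φₙ(x)ψₙ(y) with Σ|φₙ|² ≤ a², Σ|ψₙ|² ≤ b². Then the transformer Q ↦ ∬ Φ dE₁ Q dE₂ := Σₙ (∫φₙ dE₁) Q (∫ψₙ dE₂) maps the trace class S₁ into itself with ‖∬ Φ dE₁ Q dE₂‖_{S₁} ≤ a·b·‖Q‖_{S₁}. -/

import Mathlib

open scoped InnerProductSpace

/-- A projection-valued spectral measure on a measurable space `(α, 𝔄)`, acting on a
complex Hilbert space `H`, bundled together with its bounded Borel functional calculus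
`integral φ = ∫ φ dE`. -/
structure SpectralMeasure (α : Type*) [MeasurableSpace α]
    (H : Type*) [NormedAddCommGroup H] [InnerProductSpace ℂ H] [CompleteSpace H] where
  /-- the projection `E(s)` associated with a measurable set `s` -/
  proj : Set α → H →L[ℂ] H
  proj_idem : ∀ s, MeasurableSet s → (proj s).comp (proj s) = proj s
  proj_selfAdjoint : ∀ s, MeasurableSet s →
    ∀ x y : H, ⟪proj s x, y⟫_ℂ = ⟪x, proj s y⟫_ℂ
  proj_univ : proj Set.univ = ContinuousLinearMap.id ℂ H
  proj_inter : ∀ s t, MeasurableSet s → MeasurableSet t →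
    proj (s ∩ t) = (proj s).comp (proj t)
  proj_countablyAdditive : ∀ s : ℕ → Set α, (∀ n, MeasurableSet (s n)) →
    Pairwise (Function.onFun Disjoint s) →
    ∀ x : H, HasSum (fun n => proj (s n) x) (proj (⋃ n, s n) x)
  /-- the functional calculus `φ ↦ ∫ φ dE` for bounded measurable `φ` -/
  integral : (α → ℂ) → H →L[ℂ] H
  integral_indicator : ∀ s : Set α, MeasurableSet s →
    integral (s.indicator fun _ => 1) = proj s
  integral_add : ∀ φ ψ : α → ℂ, Measurable φ → Measurable ψ →
    integral (φ + ψ) = integral φ + integral ψ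
  integral_smul : ∀ (c : ℂ) (φ : α → ℂ), integral (c • φ) = c • integral φ
  integral_mul : ∀ φ ψ : α → ℂ, Measurable φ → Measurable ψ →
    integral (φ * ψ) = (integral φ).comp (integral ψ)
  integral_norm_le : ∀ (φ : α → ℂ) (M : ℝ), (∀ a, ‖φ a‖ ≤ M) → ‖integral φ‖ ≤ M

open scoped InnerProductSpace in
/-- `HasTraceNormLE T r` says `T` is trace class with trace norm at most `r`, via the
standard characterization of the trace norm as the infimum of `Σₙ ‖gₙ‖‖hₙ‖` over nuclear
representations `T u = Σₙ ⟪gₙ, u⟫ hₙ`. -/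
def HasTraceNormLE {H₁ H₂ : Type*}
    [NormedAddCommGroup H₁] [InnerProductSpace ℂ H₁]
    [NormedAddCommGroup H₂] [InnerProductSpace ℂ H₂]
    (T : H₂ →L[ℂ] H₁) (r : ℝ) : Prop :=
  ∃ (g : ℕ → H₂) (h : ℕ → H₁),
    (∀ u : H₂, HasSum (fun n => ⟪g n, u⟫_ℂ • h n) (T u)) ∧
    ∃ S, HasSum (fun n => ‖g n‖ * ‖h n‖) S ∧ S ≤ r


open scoped ComplexConjugate

namespace SpectralMeasure

variable {α : Type*} [MeasurableSpace α] {H : Type*} [NormedAddCommGroup H]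
  [InnerProductSpace ℂ H] [CompleteSpace H] (E : SpectralMeasure α H)

lemma integral_zero' : E.integral 0 = 0 := by
  have h := E.integral_smul 0 0
  simpa using h

lemma integral_sub' (φ ψ : α → ℂ) (hφ : Measurable φ) (hψ : Measurable ψ) :
    E.integral (φ - ψ) = E.integral φ - E.integral ψ := by
  have h1 : φ - ψ = φ + (-1 : ℂ) • ψ := by
    ext x; simp [sub_eq_add_neg]
  rw [h1, E.integral_add _ _ hφ (hψ.const_smul (-1 : ℂ)), E.integral_smul]
  simp [sub_eq_add_neg]

lemma integral_finset_sum' {ι : Type*} (t : Finset ι) (F : ι → α → ℂ)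
    (hF : ∀ i, Measurable (F i)) :
    E.integral (∑ i ∈ t, F i) = ∑ i ∈ t, E.integral (F i) := by
  classical
  induction t using Finset.induction with
  | empty => simpa using E.integral_zero'
  | insert i t' hnotmem ih =>
    have hm : Measurable (∑ j ∈ t', F j) := by
      have : (∑ j ∈ t', F j) = fun x => ∑ j ∈ t', F j x := by
        ext x; simp
      rw [this]
      exact Finset.measurable_sum t' (fun j _ => hF j)
    rw [Finset.sum_insert hnotmem, Finset.sum_insert hnotmem,
      E.integral_add _ _ (hF i) hm, ih]

/-- The adjointness predicate for `E.integral`. -/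
def SAdj (φ : α → ℂ) : Prop :=
  Measurable φ ∧ ∀ f g : H,
    ⟪E.integral φ f, g⟫_ℂ = ⟪f, E.integral (fun x => conj (φ x)) g⟫_ℂ

lemma sAdj_zero : E.SAdj (0 : α → ℂ) := by
  refine ⟨measurable_const, fun f g => ?_⟩
  have h0 : (fun x : α => conj ((0 : α → ℂ) x)) = (0 : α → ℂ) := by
    ext x; simp
  rw [h0, E.integral_zero']
  simp

lemma sAdj_smul_indicator (c : ℂ) (s : Set α) (hs : MeasurableSet s) :
    E.SAdj (c • s.indicator (fun _ => (1 : ℂ))) := by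
  constructor
  · exact (measurable_const.indicator hs).const_smul c
  · intro f g
    have h1 : E.integral (c • s.indicator fun _ => (1:ℂ)) = c • E.proj s := by
      rw [E.integral_smul, E.integral_indicator s hs]
    have h2 : (fun x => conj ((c • s.indicator (fun _ => (1:ℂ))) x))
        = (conj c) • s.indicator (fun _ => (1:ℂ)) := by
      ext x
      by_cases hx : x ∈ s <;> simp [Set.indicator, hx]
    rw [h1, h2, E.integral_smul, E.integral_indicator s hs]
    simp only [ContinuousLinearMap.smul_apply]
    rw [inner_smul_left, inner_smul_right, E.proj_selfAdjoint s hs]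

lemma sAdj_add {φ ψ : α → ℂ} (hφ : E.SAdj φ) (hψ : E.SAdj ψ) : E.SAdj (φ + ψ) := by
  refine ⟨hφ.1.add hψ.1, fun f g => ?_⟩
  have hφc : Measurable fun x => conj (φ x) := continuous_star.measurable.comp hφ.1
  have hψc : Measurable fun x => conj (ψ x) := continuous_star.measurable.comp hψ.1
  have hc : (fun x => conj ((φ + ψ) x))
      = (fun x => conj (φ x)) + fun x => conj (ψ x) := by
    ext x; simp
  rw [E.integral_add _ _ hφ.1 hψ.1, hc, E.integral_add _ _ hφc hψc]
  simp only [ContinuousLinearMap.add_apply, inner_add_left, inner_add_right]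
  rw [hφ.2 f g, hψ.2 f g]

lemma sAdj_sum {ι : Type*} (t : Finset ι) (F : ι → α → ℂ)
    (hF : ∀ i ∈ t, E.SAdj (F i)) : E.SAdj (∑ i ∈ t, F i) := by
  classical
  induction t using Finset.induction with
  | empty => simpa using E.sAdj_zero
  | insert i t' hnotmem ih =>
    rw [Finset.sum_insert hnotmem]
    exact E.sAdj_add (hF i (Finset.mem_insert_self i t'))
      (ih fun j hj => hF j (Finset.mem_insert_of_mem hj))

lemma sAdj_of_finite_range (φ : α → ℂ) (hφ : Measurable φ)
    (hfin : (Set.range φ).Finite) : E.SAdj φ := by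
  classical
  have hrepr : φ = ∑ v ∈ hfin.toFinset, v • (φ ⁻¹' {v}).indicator (fun _ => (1:ℂ)) := by
    ext x
    rw [Finset.sum_apply, Finset.sum_eq_single (φ x)]
    · simp [Set.indicator]
    · intro v _ hv
      simp only [Pi.smul_apply, smul_eq_mul, Set.indicator, Set.mem_preimage,
        Set.mem_singleton_iff]
      rw [if_neg (fun hh => hv (by rw [hh]))]
      simp
    · intro hx
      exact absurd (hfin.mem_toFinset.mpr ⟨x, rfl⟩) hx
  rw [hrepr]
  exact E.sAdj_sum _ _ fun v _ =>
    E.sAdj_smul_indicator v _ (hφ (measurableSet_singleton v))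

/-- The grid rounding function. -/
noncomputable def grid (n : ℕ) (z : ℂ) : ℂ :=
  ((⌊(n : ℝ) * z.re⌋ : ℝ) / n : ℝ) + ((⌊(n : ℝ) * z.im⌋ : ℝ) / n : ℝ) * Complex.I

lemma measurable_grid (n : ℕ) : Measurable (grid n) := by
  unfold grid
  apply Measurable.add
  · exact Complex.measurable_ofReal.comp
      ((measurable_from_top.comp (Int.measurable_floor.comp
        (Complex.measurable_re.const_mul _))).div_const _)
  · exact (Complex.measurable_ofReal.comp
      ((measurable_from_top.comp (Int.measurable_floor.comp
        (Complex.measurable_im.const_mul _))).div_const _)).mul_const _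

lemma floor_div_approx (n : ℕ) (hn : 0 < n) (x : ℝ) :
    |x - (⌊(n : ℝ) * x⌋ : ℝ) / n| ≤ 1 / n := by
  have hn' : (0 : ℝ) < n := by exact_mod_cast hn
  have h1 : (⌊(n : ℝ) * x⌋ : ℝ) ≤ (n : ℝ) * x := Int.floor_le _
  have h2 : (n : ℝ) * x < (⌊(n : ℝ) * x⌋ : ℝ) + 1 := Int.lt_floor_add_one _
  have e : x - (⌊(n : ℝ) * x⌋ : ℝ) / n = ((n : ℝ) * x - (⌊(n : ℝ) * x⌋ : ℝ)) / n := by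
    rw [sub_div, mul_comm, mul_div_assoc, div_self (ne_of_gt hn'), mul_one]
  rw [e, abs_div, abs_of_pos hn']
  gcongr
  rw [abs_le]
  constructor <;> linarith

lemma grid_approx (n : ℕ) (hn : 0 < n) (z : ℂ) : ‖z - grid n z‖ ≤ 2 / n := by
  have hre : (z - grid n z).re = z.re - (⌊(n : ℝ) * z.re⌋ : ℝ) / n := by
    simp [grid]
  have him : (z - grid n z).im = z.im - (⌊(n : ℝ) * z.im⌋ : ℝ) / n := by
    simp [grid]
  calc ‖z - grid n z‖ ≤ |(z - grid n z).re| + |(z - grid n z).im| := Complex.norm_le_abs_re_add_abs_im _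
    _ ≤ 1 / n + 1 / n := by
        rw [hre, him]
        exact add_le_add (floor_div_approx n hn z.re) (floor_div_approx n hn z.im)
    _ = 2 / n := by ring

lemma sAdj_grid_comp (n : ℕ) (φ : α → ℂ) (hφ : Measurable φ) (M : ℝ)
    (hM : ∀ x, ‖φ x‖ ≤ M) : E.SAdj (fun x => grid n (φ x)) := by
  classical
  apply E.sAdj_of_finite_range _ ((measurable_grid n).comp hφ)
  set c : ℤ := ⌈(n : ℝ) * M⌉ + 1 with hc
  have hfin : (Set.Icc (-c) c ×ˢ Set.Icc (-c) c : Set (ℤ × ℤ)).Finite :=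
    (Set.finite_Icc _ _).prod (Set.finite_Icc _ _)
  apply Set.Finite.subset (hfin.image
    (fun p : ℤ × ℤ => ((p.1 : ℝ) / n : ℝ) + ((p.2 : ℝ) / n : ℝ) * Complex.I))
  rintro z ⟨x, rfl⟩
  have hn0 : (0 : ℝ) ≤ (n : ℝ) := Nat.cast_nonneg n
  have hceil : (n : ℝ) * M ≤ (⌈(n : ℝ) * M⌉ : ℝ) := Int.le_ceil _
  have hre : |(φ x).re| ≤ M := by
    calc |(φ x).re| ≤ ‖φ x‖ := Complex.abs_re_le_norm _
      _ ≤ M := hM x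
  have him : |(φ x).im| ≤ M := by
    calc |(φ x).im| ≤ ‖φ x‖ := Complex.abs_im_le_norm _
      _ ≤ M := hM x
  have habs : ∀ t : ℝ, |t| ≤ M → ⌊(n : ℝ) * t⌋ ∈ Set.Icc (-c) c := by
    intro t ht
    have h1 : (n : ℝ) * t ≤ (n : ℝ) * M := by nlinarith [abs_le.mp ht]
    have h2 : -((n : ℝ) * M) ≤ (n : ℝ) * t := by nlinarith [abs_le.mp ht]
    constructor
    · rw [Int.le_floor, hc]
      push_cast
      linarith
    · have h3 : ⌊(n : ℝ) * t⌋ ≤ ⌈(n : ℝ) * t⌉ := Int.floor_le_ceil _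
      have h4 : ⌈(n : ℝ) * t⌉ ≤ ⌈(n : ℝ) * M⌉ := Int.ceil_mono h1
      rw [hc]
      linarith
  refine ⟨(⌊(n : ℝ) * (φ x).re⌋, ⌊(n : ℝ) * (φ x).im⌋),
    ⟨habs _ hre, habs _ him⟩, ?_⟩
  simp [grid]

theorem integral_adjoint_inner (φ : α → ℂ) (hφ : Measurable φ) (M : ℝ)
    (hM : ∀ x, ‖φ x‖ ≤ M) (f g : H) :
    ⟪E.integral φ f, g⟫_ℂ = ⟪f, E.integral (fun x => conj (φ x)) g⟫_ℂ := by
  have hφc : Measurable fun x => conj (φ x) := continuous_star.measurable.comp hφ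
  set D : ℂ := ⟪E.integral φ f, g⟫_ℂ - ⟪f, E.integral (fun x => conj (φ x)) g⟫_ℂ with hD
  have key : ∀ n : ℕ, 0 < n → ‖D‖ ≤ 4 / n * (‖f‖ * ‖g‖) := by
    intro n hn
    set s : α → ℂ := fun x => grid n (φ x) with hsdef
    have hsm : Measurable s := (measurable_grid n).comp hφ
    have hsc : Measurable fun x => conj (s x) := continuous_star.measurable.comp hsm
    have hsadj : E.SAdj s := E.sAdj_grid_comp n φ hφ M hM
    have hdiff : ∀ x, ‖(φ - s) x‖ ≤ 2 / n := by
      intro x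
      simpa using grid_approx n hn (φ x)
    have hdiffc : ∀ x, ‖((fun x => conj (φ x)) - fun x => conj (s x)) x‖ ≤ 2 / n := by
      intro x
      simp only [Pi.sub_apply, ← map_sub]
      calc ‖conj (φ x - s x)‖ = ‖φ x - s x‖ := RCLike.norm_conj _
        _ ≤ 2 / n := hdiff x
    have h1 : E.integral φ = E.integral (φ - s) + E.integral s := by
      rw [E.integral_sub' φ s hφ hsm]
      abel
    have h2 : E.integral (fun x => conj (φ x))
        = E.integral ((fun x => conj (φ x)) - fun x => conj (s x))
          + E.integral (fun x => conj (s x)) := by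
      rw [E.integral_sub' _ _ hφc hsc]
      abel
    have hnorm1 : ‖E.integral (φ - s)‖ ≤ 2 / n := E.integral_norm_le _ _ hdiff
    have hnorm2 : ‖E.integral ((fun x => conj (φ x)) - fun x => conj (s x))‖ ≤ 2 / n :=
      E.integral_norm_le _ _ hdiffc
    have hDeq : D = ⟪E.integral (φ - s) f, g⟫_ℂ
        - ⟪f, E.integral ((fun x => conj (φ x)) - fun x => conj (s x)) g⟫_ℂ := by
      rw [hD, h1, h2]
      simp only [ContinuousLinearMap.add_apply, inner_add_left, inner_add_right]
      rw [hsadj.2 f g]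
      ring
    rw [hDeq]
    have e1 : ‖⟪E.integral (φ - s) f, g⟫_ℂ‖ ≤ 2 / n * (‖f‖ * ‖g‖) := by
      calc ‖⟪E.integral (φ - s) f, g⟫_ℂ‖ ≤ ‖E.integral (φ - s) f‖ * ‖g‖ :=
            norm_inner_le_norm _ _
        _ ≤ (‖E.integral (φ - s)‖ * ‖f‖) * ‖g‖ := by
            gcongr
            exact (E.integral (φ - s)).le_opNorm f
        _ ≤ (2 / n * ‖f‖) * ‖g‖ := by gcongr
        _ = 2 / n * (‖f‖ * ‖g‖) := by ring
    have e2 : ‖⟪f, E.integral ((fun x => conj (φ x)) - fun x => conj (s x)) g⟫_ℂ‖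
        ≤ 2 / n * (‖f‖ * ‖g‖) := by
      calc ‖⟪f, E.integral ((fun x => conj (φ x)) - fun x => conj (s x)) g⟫_ℂ‖
          ≤ ‖f‖ * ‖E.integral ((fun x => conj (φ x)) - fun x => conj (s x)) g‖ :=
            norm_inner_le_norm _ _
        _ ≤ ‖f‖ * (‖E.integral ((fun x => conj (φ x)) - fun x => conj (s x))‖ * ‖g‖) := by
            gcongr
            exact ContinuousLinearMap.le_opNorm _ g
        _ ≤ ‖f‖ * (2 / n * ‖g‖) := by gcongr
        _ = 2 / n * (‖f‖ * ‖g‖) := by ring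
    calc ‖⟪E.integral (φ - s) f, g⟫_ℂ
          - ⟪f, E.integral ((fun x => conj (φ x)) - fun x => conj (s x)) g⟫_ℂ‖
        ≤ ‖⟪E.integral (φ - s) f, g⟫_ℂ‖
          + ‖⟪f, E.integral ((fun x => conj (φ x)) - fun x => conj (s x)) g⟫_ℂ‖ := norm_sub_le _ _
      _ ≤ 2 / n * (‖f‖ * ‖g‖) + 2 / n * (‖f‖ * ‖g‖) := add_le_add e1 e2
      _ = 4 / n * (‖f‖ * ‖g‖) := by ring
  have hD0 : ‖D‖ ≤ 0 := by
    apply le_of_forall_pos_le_add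
    intro ε hε
    obtain ⟨n, hn⟩ := exists_nat_gt (4 * (‖f‖ * ‖g‖ + 1) / ε)
    have hnpos : 0 < n := by
      by_contra hc0
      push_neg at hc0
      interval_cases n
      simp only [Nat.cast_zero] at hn
      have : 0 < 4 * (‖f‖ * ‖g‖ + 1) / ε := by positivity
      linarith
    have hn' : (0 : ℝ) < n := by exact_mod_cast hnpos
    have h4 : 4 * (‖f‖ * ‖g‖ + 1) / n < ε := by
      rw [div_lt_iff₀ hn']
      rw [div_lt_iff₀ hε] at hn
      linarith
    have hlt : ‖D‖ < ε := by
      calc ‖D‖ ≤ 4 / n * (‖f‖ * ‖g‖) := key n hnpos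
        _ ≤ 4 * (‖f‖ * ‖g‖ + 1) / n := by
            rw [div_mul_eq_mul_div, div_le_div_iff₀ hn' hn']
            nlinarith [norm_nonneg f, norm_nonneg g]
        _ < ε := h4
    linarith
  have : D = 0 := by
    rwa [← norm_le_zero_iff]
  exact sub_eq_zero.mp this

theorem sum_sq_integral_le (φ : ℕ → α → ℂ) (hm : ∀ n, Measurable (φ n)) (a : ℝ)
    (ha : 0 ≤ a) (hb : ∀ (x : α) (F : Finset ℕ), ∑ n ∈ F, ‖φ n x‖ ^ 2 ≤ a ^ 2)
    (f : H) (F : Finset ℕ) :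
    ∑ n ∈ F, ‖E.integral (φ n) f‖ ^ 2 ≤ a ^ 2 * ‖f‖ ^ 2 := by
  classical
  have hbd : ∀ n x, ‖φ n x‖ ≤ a := by
    intro n x
    have h1 : ‖φ n x‖ ^ 2 ≤ a ^ 2 := by
      have := hb x {n}
      simpa using this
    nlinarith [norm_nonneg (φ n x)]
  have hmc : ∀ n, Measurable fun x => conj (φ n x) :=
    fun n => continuous_star.measurable.comp (hm n)
  set g : α → ℂ := fun x => ∑ n ∈ F, conj (φ n x) * φ n x with hg
  have hgsum : g = ∑ n ∈ F, fun x => conj (φ n x) * φ n x := by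
    ext x; simp [hg]
  have hint : E.integral g = ∑ n ∈ F, E.integral fun x => conj (φ n x) * φ n x := by
    rw [hgsum]; exact E.integral_finset_sum' F (fun n x => conj (φ n x) * φ n x) (fun n => (hmc n).mul (hm n))
  have hcast : ((∑ n ∈ F, ‖E.integral (φ n) f‖ ^ 2 : ℝ) : ℂ) = ⟪f, E.integral g f⟫_ℂ := by
    rw [hint]
    push_cast
    simp only [Finset.sum_apply, ContinuousLinearMap.coe_coe, inner_sum]
    refine Finset.sum_congr rfl fun n _ => ?_
    have hmul : (E.integral fun x => conj (φ n x) * φ n x)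
        = (E.integral fun x => conj (φ n x)).comp (E.integral (φ n)) :=
      E.integral_mul _ _ (hmc n) (hm n)
    have hadj := E.integral_adjoint_inner (φ n) (hm n) a (hbd n) f (E.integral (φ n) f)
    rw [hmul, ContinuousLinearMap.comp_apply, ← hadj, inner_self_eq_norm_sq_to_K]
    norm_cast
  have hgbd : ∀ x, ‖g x‖ ≤ a ^ 2 := by
    intro x
    have : g x = ((∑ n ∈ F, ‖φ n x‖ ^ 2 : ℝ) : ℂ) := by
      rw [hg]
      push_cast
      refine Finset.sum_congr rfl fun n _ => ?_
      rw [RCLike.conj_mul]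
      norm_cast
    rw [this, Complex.norm_real, Real.norm_of_nonneg (by positivity)]
    exact hb x F
  have hgop : ‖E.integral g‖ ≤ a ^ 2 := E.integral_norm_le _ _ hgbd
  have hre : (∑ n ∈ F, ‖E.integral (φ n) f‖ ^ 2) = (⟪f, E.integral g f⟫_ℂ).re := by
    rw [← hcast]
    exact (Complex.ofReal_re _).symm
  rw [hre]
  calc (⟪f, E.integral g f⟫_ℂ).re ≤ ‖⟪f, E.integral g f⟫_ℂ‖ :=
        Complex.re_le_norm _
    _ ≤ ‖f‖ * ‖E.integral g f‖ := norm_inner_le_norm _ _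
    _ ≤ ‖f‖ * (‖E.integral g‖ * ‖f‖) := by
        gcongr
        exact ContinuousLinearMap.le_opNorm _ f
    _ ≤ ‖f‖ * (a ^ 2 * ‖f‖) := by gcongr
    _ = a ^ 2 * ‖f‖ ^ 2 := by ring

end SpectralMeasure

set_option maxHeartbeats 1000000 in
/-- Let `E₁`, `E₂` be spectral measures on `H₁`, `H₂` and let `Φ` admit a
Haagerup representation `Φ(x,y) = Σₙ φₙ(x)ψₙ(y)` with `Σ|φₙ|² ≤ a²`, `Σ|ψₙ|² ≤ b²`
pointwise. Then the transformer `Q ↦ ∬ Φ dE₁ Q dE₂ := Σₙ (∫φₙ dE₁) Q (∫ψₙ dE₂)`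
(the weak-operator sum, called `T` here) maps the trace class into itself with
`‖∬ Φ dE₁ Q dE₂‖_{S₁} ≤ a·b·‖Q‖_{S₁}`. -/
theorem haagerup_schur_multiplier_trace_class
    {X Y : Type*} [MeasurableSpace X] [MeasurableSpace Y]
    {H₁ H₂ : Type*} [NormedAddCommGroup H₁] [InnerProductSpace ℂ H₁] [CompleteSpace H₁]
    [NormedAddCommGroup H₂] [InnerProductSpace ℂ H₂] [CompleteSpace H₂]
    (E₁ : SpectralMeasure X H₁) (E₂ : SpectralMeasure Y H₂)
    (φ : ℕ → X → ℂ) (ψ : ℕ → Y → ℂ)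
    (hφm : ∀ n, Measurable (φ n)) (hψm : ∀ n, Measurable (ψ n))
    (a b : ℝ) (ha : 0 ≤ a) (hb : 0 ≤ b)
    (hφ : ∀ x, ∃ S, HasSum (fun n => ‖φ n x‖ ^ 2) S ∧ S ≤ a ^ 2)
    (hψ : ∀ y, ∃ S, HasSum (fun n => ‖ψ n y‖ ^ 2) S ∧ S ≤ b ^ 2)
    (Q : H₂ →L[ℂ] H₁) (r : ℝ) (hQ : HasTraceNormLE Q r)
    (T : H₂ →L[ℂ] H₁)
    (hT : ∀ u : H₂, ∀ v : H₁,
      HasSum (fun n => ⟪(E₁.integral (φ n)) (Q ((E₂.integral (ψ n)) u)), v⟫_ℂ)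
        ⟪T u, v⟫_ℂ) :
    HasTraceNormLE T (a * b * r) := by
  classical
  obtain ⟨g, h, hrep, S, hS, hSr⟩ := hQ
  have hψc : ∀ n, Measurable fun y => conj (ψ n y) :=
    fun n => continuous_star.measurable.comp (hψm n)
  have hφF : ∀ (x : X) (F : Finset ℕ), ∑ n ∈ F, ‖φ n x‖ ^ 2 ≤ a ^ 2 := by
    intro x F
    obtain ⟨S', hS', hle⟩ := hφ x
    exact (sum_le_hasSum F (fun i _ => by positivity) hS').trans hle
  have hψF : ∀ (y : Y) (F : Finset ℕ), ∑ n ∈ F, ‖conj (ψ n y)‖ ^ 2 ≤ b ^ 2 := by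
    intro y F
    obtain ⟨S', hS', hle⟩ := hψ y
    calc ∑ n ∈ F, ‖conj (ψ n y)‖ ^ 2 = ∑ n ∈ F, ‖ψ n y‖ ^ 2 :=
          Finset.sum_congr rfl fun n _ => by rw [RCLike.norm_conj]
      _ ≤ S' := sum_le_hasSum F (fun i _ => by positivity) hS'
      _ ≤ b ^ 2 := hle
  have hψbd : ∀ n (y : Y), ‖ψ n y‖ ≤ b := by
    intro n y
    obtain ⟨S', hS', hle⟩ := hψ y
    have h1 : ‖ψ n y‖ ^ 2 ≤ b ^ 2 :=
      le_trans (by simpa using sum_le_hasSum {n} (fun i _ => by positivity) hS') hle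
    nlinarith [norm_nonneg (ψ n y)]
  have hA : ∀ (f : H₁) (F : Finset ℕ),
      ∑ n ∈ F, ‖E₁.integral (φ n) f‖ ^ 2 ≤ a ^ 2 * ‖f‖ ^ 2 :=
    fun f F => E₁.sum_sq_integral_le φ hφm a ha hφF f F
  have hB' : ∀ (u : H₂) (F : Finset ℕ),
      ∑ n ∈ F, ‖E₂.integral (fun y => conj (ψ n y)) u‖ ^ 2 ≤ b ^ 2 * ‖u‖ ^ 2 :=
    fun u F => E₂.sum_sq_integral_le (fun n y => conj (ψ n y)) hψc b hb hψF u F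
  set G : ℕ × ℕ → H₂ := fun p => E₂.integral (fun y => conj (ψ p.1 y)) (g p.2) with hG
  set Hv : ℕ × ℕ → H₁ := fun p => E₁.integral (φ p.1) (h p.2) with hHv
  have hw : ∀ P : Finset (ℕ × ℕ), ∑ p ∈ P, ‖G p‖ * ‖Hv p‖ ≤ a * b * S := by
    intro P
    set N := P.image Prod.fst with hN
    set K := P.image Prod.snd with hK
    have hsub : P ⊆ N ×ˢ K := fun p hp =>
      Finset.mem_product.mpr ⟨Finset.mem_image_of_mem _ hp, Finset.mem_image_of_mem _ hp⟩
    have hCS : ∀ k : ℕ, ∑ n ∈ N, ‖G (n, k)‖ * ‖Hv (n, k)‖ ≤ (b * ‖g k‖) * (a * ‖h k‖) := by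
      intro k
      have h1 := Real.sum_mul_le_sqrt_mul_sqrt N (fun n => ‖G (n, k)‖) (fun n => ‖Hv (n, k)‖)
      have h2 : Real.sqrt (∑ n ∈ N, ‖G (n, k)‖ ^ 2) ≤ b * ‖g k‖ := by
        rw [show (b * ‖g k‖) = Real.sqrt ((b * ‖g k‖) ^ 2) from
          (Real.sqrt_sq (by positivity)).symm]
        apply Real.sqrt_le_sqrt
        calc ∑ n ∈ N, ‖G (n, k)‖ ^ 2 ≤ b ^ 2 * ‖g k‖ ^ 2 := hB' (g k) N
          _ = (b * ‖g k‖) ^ 2 := by ring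
      have h3 : Real.sqrt (∑ n ∈ N, ‖Hv (n, k)‖ ^ 2) ≤ a * ‖h k‖ := by
        rw [show (a * ‖h k‖) = Real.sqrt ((a * ‖h k‖) ^ 2) from
          (Real.sqrt_sq (by positivity)).symm]
        apply Real.sqrt_le_sqrt
        calc ∑ n ∈ N, ‖Hv (n, k)‖ ^ 2 ≤ a ^ 2 * ‖h k‖ ^ 2 := hA (h k) N
          _ = (a * ‖h k‖) ^ 2 := by ring
      calc ∑ n ∈ N, ‖G (n, k)‖ * ‖Hv (n, k)‖
          ≤ Real.sqrt (∑ n ∈ N, ‖G (n, k)‖ ^ 2) * Real.sqrt (∑ n ∈ N, ‖Hv (n, k)‖ ^ 2) := h1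
        _ ≤ (b * ‖g k‖) * (a * ‖h k‖) :=
            mul_le_mul h2 h3 (Real.sqrt_nonneg _) (by positivity)
    calc ∑ p ∈ P, ‖G p‖ * ‖Hv p‖ ≤ ∑ p ∈ N ×ˢ K, ‖G p‖ * ‖Hv p‖ :=
          Finset.sum_le_sum_of_subset_of_nonneg hsub (fun p _ _ => by positivity)
      _ = ∑ k ∈ K, ∑ n ∈ N, ‖G (n, k)‖ * ‖Hv (n, k)‖ := Finset.sum_product_right _ _ _
      _ ≤ ∑ k ∈ K, (b * ‖g k‖) * (a * ‖h k‖) := Finset.sum_le_sum fun k _ => hCS k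
      _ = a * b * ∑ k ∈ K, ‖g k‖ * ‖h k‖ := by
          rw [Finset.mul_sum]
          exact Finset.sum_congr rfl fun k _ => by ring
      _ ≤ a * b * S := by
          have hKS := sum_le_hasSum K (fun i _ => by positivity) hS
          exact mul_le_mul_of_nonneg_left hKS (by positivity)
  have hwsum : Summable fun p : ℕ × ℕ => ‖G p‖ * ‖Hv p‖ :=
    summable_of_sum_le (fun p => by positivity) hw
  have hwtsum : ∑' p : ℕ × ℕ, ‖G p‖ * ‖Hv p‖ ≤ a * b * S := Summable.tsum_le_of_sum_le hwsum hw
  have hinner : ∀ (n k : ℕ) (u : H₂),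
      ⟪g k, E₂.integral (ψ n) u⟫_ℂ = ⟪G (n, k), u⟫_ℂ := by
    intro n k u
    have hadj := E₂.integral_adjoint_inner (fun y => conj (ψ n y)) (hψc n) b
      (fun y => by rw [RCLike.norm_conj]; exact hψbd n y) (g k) u
    have hcc : (fun y => conj (conj (ψ n y))) = ψ n := by ext y; simp
    rw [hcc] at hadj
    rw [hG]
    exact hadj.symm
  have hrow : ∀ (u : H₂) (n : ℕ),
      HasSum (fun k => ⟪G (n, k), u⟫_ℂ • Hv (n, k))
        (E₁.integral (φ n) (Q (E₂.integral (ψ n) u))) := by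
    intro u n
    have h1 := (E₁.integral (φ n)).hasSum (hrep (E₂.integral (ψ n) u))
    have heq : (fun k => ⟪G (n, k), u⟫_ℂ • Hv (n, k))
        = fun k => E₁.integral (φ n) (⟪g k, E₂.integral (ψ n) u⟫_ℂ • h k) := by
      funext k
      rw [map_smul, hinner n k u, hHv]
    rw [heq]
    exact h1
  have hFsum : ∀ u : H₂, Summable fun p : ℕ × ℕ => ⟪G p, u⟫_ℂ • Hv p := by
    intro u
    apply Summable.of_norm_bounded (hwsum.mul_right ‖u‖)
    intro p
    rw [norm_smul]
    calc ‖⟪G p, u⟫_ℂ‖ * ‖Hv p‖ ≤ (‖G p‖ * ‖u‖) * ‖Hv p‖ := by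
          gcongr
          exact norm_inner_le_norm _ _
      _ = ‖G p‖ * ‖Hv p‖ * ‖u‖ := by ring
  have hTu : ∀ u : H₂, HasSum (fun p : ℕ × ℕ => ⟪G p, u⟫_ℂ • Hv p) (T u) := by
    intro u
    obtain ⟨W, hW⟩ := hFsum u
    have hcol : HasSum (fun n => E₁.integral (φ n) (Q (E₂.integral (ψ n) u))) W :=
      hW.prod_fiberwise (hrow u)
    have hWT : W = T u := by
      apply ext_inner_right ℂ
      intro v
      have h1 : HasSum (fun n => ⟪v, E₁.integral (φ n) (Q (E₂.integral (ψ n) u))⟫_ℂ)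
          ⟪v, W⟫_ℂ := (innerSL ℂ v).hasSum hcol
      have h2 := h1.star
      simp only [RCLike.star_def, inner_conj_symm] at h2
      exact h2.unique (hT u v)
    rwa [hWT] at hW
  refine ⟨fun m => G ((Denumerable.eqv (ℕ × ℕ)).symm m),
    fun m => Hv ((Denumerable.eqv (ℕ × ℕ)).symm m), ?_, ?_⟩
  · intro u
    exact ((Denumerable.eqv (ℕ × ℕ)).symm.hasSum_iff).mpr (hTu u)
  · refine ⟨∑' p : ℕ × ℕ, ‖G p‖ * ‖Hv p‖, ?_, ?_⟩
    · exact ((Denumerable.eqv (ℕ × ℕ)).symm.hasSum_iff).mpr hwsum.hasSum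
    · calc ∑' p : ℕ × ℕ, ‖G p‖ * ‖Hv p‖ ≤ a * b * S := hwtsum
        _ ≤ a * b * r := mul_le_mul_of_nonneg_left hSr (by positivity)
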